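/- The dual (arc-reversal) of H(p,q,d) is isomorphic to H(q,p,d); formally, the map sending vertex i of H(p,q,d) to vertex pq/d - 1 - i induces an isomorphism from the reverse of H(p,q,d) to H(q,p,d). -/
import Mathlib


/-- The OTIS transpose map: for a = iq+j (0 ≤ i < p, 0 ≤ j < q), tau a = (q-1-j)p + (p-1-i). -/
def tau (p q a : ℕ) : ℕ := (q - 1 - a % q) * p + (p - 1 - a / q)

/-- Arc multiplicity from vertex u to vertex v in H(p,q,d). -/
def mult (p q d u v : ℕ) : ℕ :=
  ((Finset.range d).filter (fun r => tau p q (d * u + r) / d = v)).card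

/-- There is an arc from u to v in H(p,q,d). -/
def arc (p q d u v : ℕ) : Prop := ∃ r < d, tau p q (d * u + r) / d = v

lemma tau_eq (p q i j : ℕ) (hi : i < p) (hj : j < q) :
    tau p q (i * q + j) = (q - 1 - j) * p + (p - 1 - i) := by
  have hq : 0 < q := lt_of_le_of_lt (Nat.zero_le j) hj
  unfold tau
  rw [add_comm (i * q) j, Nat.add_mul_mod_self_right, Nat.add_mul_div_right _ _ hq,
    Nat.mod_eq_of_lt hj, Nat.div_eq_of_lt hj]
  simp

lemma tau_lt' (p q i j : ℕ) (hi : i < p) (hj : j < q) : tau p q (i * q + j) < q * p := by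
  rw [tau_eq p q i j hi hj]
  have h1 : (q - 1 - j) * p ≤ (q - 1) * p := Nat.mul_le_mul_right _ (Nat.sub_le _ _)
  have h2 : (q - 1) * p = q * p - p := Nat.sub_one_mul q p
  have h3 : p ≤ q * p := Nat.le_mul_of_pos_left p (lt_of_le_of_lt (Nat.zero_le j) hj)
  omega

lemma decomp (p q a : ℕ) (hq : 0 < q) (ha : a < p * q) :
    ∃ i j, i < p ∧ j < q ∧ a = i * q + j := by
  refine ⟨a / q, a % q, (Nat.div_lt_iff_lt_mul hq).mpr ha, Nat.mod_lt _ hq, ?_⟩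
  have h := Nat.div_add_mod a q
  have h2 : a / q * q = q * (a / q) := mul_comm _ _
  omega

lemma tau_lt (p q a : ℕ) (hp : 0 < p) (hq : 0 < q) (ha : a < p * q) : tau p q a < q * p := by
  obtain ⟨i, j, hi, hj, rfl⟩ := decomp p q a hq ha
  exact tau_lt' p q i j hi hj

lemma tau_tau (p q a : ℕ) (hp : 0 < p) (hq : 0 < q) (ha : a < p * q) :
    tau q p (tau p q a) = a := by
  obtain ⟨i, j, hi, hj, rfl⟩ := decomp p q a hq ha
  rw [tau_eq p q i j hi hj, tau_eq q p _ _ (by omega) (by omega)]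
  have h2 : p - 1 - (p - 1 - i) = i := by omega
  have h3 : q - 1 - (q - 1 - j) = j := by omega
  rw [h2, h3]

lemma tau_neg' (p q i j : ℕ) (hi : i < p) (hj : j < q) :
    tau p q (p * q - 1 - (i * q + j)) = p * q - 1 - tau p q (i * q + j) := by
  have hp : 0 < p := lt_of_le_of_lt (Nat.zero_le i) hi
  have hq : 0 < q := lt_of_le_of_lt (Nat.zero_le j) hj
  have e1 : (p - 1 - i) * q = (p - 1) * q - i * q := Nat.sub_mul _ _ _
  have e2 : (p - 1) * q = p * q - q := Nat.sub_one_mul p q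
  have e3 : i * q ≤ (p - 1) * q := Nat.mul_le_mul_right _ (by omega)
  have e4 : q ≤ p * q := Nat.le_mul_of_pos_left q hp
  have f1 : (q - 1 - j) * p = (q - 1) * p - j * p := Nat.sub_mul _ _ _
  have f2 : (q - 1) * p = q * p - p := Nat.sub_one_mul q p
  have f3 : j * p ≤ (q - 1) * p := Nat.mul_le_mul_right _ (by omega)
  have f4 : p ≤ q * p := Nat.le_mul_of_pos_left p hq
  have f5 : q * p = p * q := mul_comm q p
  have key : p * q - 1 - (i * q + j) = (p - 1 - i) * q + (q - 1 - j) := by omega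
  rw [key, tau_eq p q _ _ (by omega) (by omega), tau_eq p q i j hi hj]
  have g1 : q - 1 - (q - 1 - j) = j := by omega
  have g2 : p - 1 - (p - 1 - i) = i := by omega
  rw [g1, g2]
  omega

lemma tau_neg (p q a : ℕ) (hp : 0 < p) (hq : 0 < q) (ha : a < p * q) :
    tau p q (p * q - 1 - a) = p * q - 1 - tau p q a := by
  have hi : a / q < p := (Nat.div_lt_iff_lt_mul hq).mpr ha
  have hj : a % q < q := Nat.mod_lt _ hq
  have hdm : a = a / q * q + a % q := by
    have := Nat.div_add_mod a q
    have : a / q * q = q * (a / q) := mul_comm _ _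
    omega
  conv_lhs => rw [hdm]
  conv_rhs => rw [hdm]
  exact tau_neg' p q (a / q) (a % q) hi hj

/-- The key correspondence lemma. -/
lemma key_lemma (p q d : ℕ) (hp : 0 < p) (hq : 0 < q) (hd : 0 < d) (hdiv : d ∣ p * q)
    (u v r : ℕ) (hu : u < p * q / d) (hv : v < p * q / d) (hr : r < d)
    (h : tau p q (d * u + r) / d = v) :
    d - 1 - tau p q (d * u + r) % d < d ∧
    tau q p (d * (p * q / d - 1 - v) + (d - 1 - tau p q (d * u + r) % d)) / d
      = p * q / d - 1 - u ∧
    d - 1 - tau q p (d * (p * q / d - 1 - v) + (d - 1 - tau p q (d * u + r) % d)) % d = r := by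
  set N := p * q / d with hNdef
  have hN : d * N = p * q := Nat.mul_div_cancel' hdiv
  set a := d * u + r with hadef
  have hu1 : d * (u + 1) = d * u + d := by ring
  have hu2 : d * (u + 1) ≤ d * N := Nat.mul_le_mul_left d (by omega)
  have ha : a < p * q := by omega
  set t := tau p q a with htdef
  have hqp : q * p = p * q := mul_comm q p
  have htlt : t < p * q := by
    have := tau_lt p q a hp hq ha
    omega
  have htm : t % d < d := Nat.mod_lt _ hd
  have hdm : t = d * v + t % d := by
    have := Nat.div_add_mod t d
    rw [h] at this; omega
  have hv1 : d * (v + 1) = d * v + d := by ring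
  have hv2 : d * (v + 1) ≤ d * N := Nat.mul_le_mul_left d (by omega)
  have e1 : d * (N - 1 - v) = d * (N - 1) - d * v := Nat.mul_sub _ _ _
  have e2 : d * (N - 1) = d * N - d := by rw [Nat.mul_sub, mul_one]
  have hb : d * (N - 1 - v) + (d - 1 - t % d) = p * q - 1 - t := by omega
  have htau : tau q p (d * (N - 1 - v) + (d - 1 - t % d)) = d * (N - 1 - u) + (d - 1 - r) := by
    rw [hb]
    have hneg : tau q p (q * p - 1 - t) = q * p - 1 - tau q p t :=
      tau_neg q p t hq hp (by omega)
    rw [show p * q - 1 - t = q * p - 1 - t by omega, hneg, tau_tau p q a hp hq ha]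
    have g1 : d * (N - 1 - u) = d * (N - 1) - d * u := Nat.mul_sub _ _ _
    omega
  refine ⟨by omega, ?_, ?_⟩
  · rw [htau, Nat.mul_add_div hd, Nat.div_eq_of_lt (by omega)]
    omega
  · rw [htau, Nat.mul_add_mod, Nat.mod_eq_of_lt (by omega)]
    omega

theorem stmt_14 (p q d : ℕ) (hp : 1 < p) (hq : 1 < q) (hd : 1 < d) (hdiv : d ∣ p * q) :
    ∀ u < p * q / d, ∀ v < p * q / d,
      mult p q d u v = mult q p d (p * q / d - 1 - v) (p * q / d - 1 - u) := by
  intro u hu v hv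
  have hp0 : 0 < p := by omega
  have hq0 : 0 < q := by omega
  have hd0 : 0 < d := by omega
  have hdiv' : d ∣ q * p := by rwa [mul_comm]
  set N := p * q / d with hNdef
  have hqp : q * p / d = N := by rw [mul_comm]
  have hN : d * N = p * q := Nat.mul_div_cancel' hdiv
  have hN0 : 0 < N :=
    Nat.div_pos (Nat.le_of_dvd (Nat.mul_pos hp0 hq0) hdiv) hd0
  unfold mult
  apply Finset.card_bij'
    (i := fun r _ => d - 1 - tau p q (d * u + r) % d)
    (j := fun s _ => d - 1 - tau q p (d * (N - 1 - v) + s) % d)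
  · intro r hr
    simp only [Finset.mem_filter, Finset.mem_range] at hr ⊢
    obtain ⟨h1, h2, h3⟩ := key_lemma p q d hp0 hq0 hd0 hdiv u v r hu hv hr.1 hr.2
    exact ⟨h1, h2⟩
  · intro s hs
    simp only [Finset.mem_filter, Finset.mem_range] at hs ⊢
    obtain ⟨h1, h2, h3⟩ := key_lemma q p d hq0 hp0 hd0 hdiv' (N - 1 - v) (N - 1 - u) s
      (by omega) (by omega) hs.1 hs.2
    rw [hqp] at h2 h3
    refine ⟨h1, ?_⟩
    rw [show N - 1 - (N - 1 - u) = u from by omega] at h2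
    rw [h2]
    omega
  · intro r hr
    simp only [Finset.mem_filter, Finset.mem_range] at hr
    obtain ⟨h1, h2, h3⟩ := key_lemma p q d hp0 hq0 hd0 hdiv u v r hu hv hr.1 hr.2
    exact h3
  · intro s hs
    simp only [Finset.mem_filter, Finset.mem_range] at hs
    obtain ⟨h1, h2, h3⟩ := key_lemma q p d hq0 hp0 hd0 hdiv' (N - 1 - v) (N - 1 - u) s
      (by omega) (by omega) hs.1 hs.2
    rw [hqp] at h3
    rw [show N - 1 - (N - 1 - u) = u from by omega] at h3
    exact h3
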